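/- Define S(x) = (30/π^4) ∫_0^∞ I_0(xt) I_0(t) K_0(t)^4 · x t dt for x ∈ [-3, 3]. Then S is continuous on [-3, 3], and the Maclaurin series Σ_{k≥0} r_{5,k} x^{2k+1}, with r_{5,k} = (30 / (4^k (k!)^2 π^4)) ∫_0^∞ I_0(t) K_0(t)^4 t^{2k+1} dt, converges uniformly to S on [-3, 3]. -/

import Mathlib

open Real MeasureTheory Set Filter Topology

/-- Modified Bessel function of the first kind, order zero. -/
noncomputable def besselI0 (t : ℝ) : ℝ :=
  (1 / π) * ∫ θ in (0:ℝ)..π, Real.exp (t * Real.cos θ)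

/-- Modified Bessel function of the second kind, order zero. -/
noncomputable def besselK0 (t : ℝ) : ℝ :=
  ∫ u in Set.Ioi (0:ℝ), Real.exp (-t * Real.cosh u)

/-- `S(x) = (30/π⁴) ∫_0^∞ I₀(xt) I₀(t) K₀(t)⁴ x t dt`. -/
noncomputable def S (x : ℝ) : ℝ :=
  (30 / π^4) * ∫ t in Set.Ioi (0:ℝ),
    besselI0 (x * t) * besselI0 t * (besselK0 t)^4 * (x * t)

/-- Maclaurin coefficients `r_{5,k}` of the 5-step density. -/
noncomputable def r5 (k : ℕ) : ℝ :=
  (30 / (4^k * (Nat.factorial k : ℝ)^2 * π^4)) *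
    ∫ t in Set.Ioi (0:ℝ), besselI0 t * (besselK0 t)^4 * t^(2*k+1)

namespace BesselAux

lemma I0_nonneg (t : ℝ) : 0 ≤ besselI0 t := by
  apply mul_nonneg (by positivity)
  apply intervalIntegral.integral_nonneg pi_pos.le
  intro θ _; positivity

lemma I0_le_exp_abs (t : ℝ) : besselI0 t ≤ Real.exp |t| := by
  have h : ∫ θ in (0:ℝ)..π, Real.exp (t * Real.cos θ) ≤ ∫ θ in (0:ℝ)..π, Real.exp |t| := by
    apply intervalIntegral.integral_mono_on pi_pos.le
    · apply Continuous.intervalIntegrable; fun_prop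
    · apply intervalIntegrable_const
    · intro θ _
      apply Real.exp_le_exp.2
      calc t * Real.cos θ ≤ |t * Real.cos θ| := le_abs_self _
        _ = |t| * |Real.cos θ| := abs_mul _ _
        _ ≤ |t| * 1 := mul_le_mul_of_nonneg_left (abs_cos_le_one θ) (abs_nonneg t)
        _ = |t| := mul_one _
  rw [besselI0]
  rw [intervalIntegral.integral_const] at h
  calc (1/π) * ∫ θ in (0:ℝ)..π, Real.exp (t * Real.cos θ)
      ≤ (1/π) * ((π - 0) • Real.exp |t|) :=
        mul_le_mul_of_nonneg_left h (by positivity)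
    _ = Real.exp |t| := by
        rw [smul_eq_mul, sub_zero]; field_simp

lemma K0_nonneg (t : ℝ) : 0 ≤ besselK0 t := by
  apply integral_nonneg; intro u; positivity

lemma sinh_le_cosh' (x : ℝ) : Real.sinh x ≤ Real.cosh x := by
  rw [Real.sinh_eq, Real.cosh_eq]
  have := (Real.exp_pos (-x)).le
  linarith

lemma cosh_ge_self {u : ℝ} (hu : 0 ≤ u) : u ≤ Real.cosh u :=
  le_trans (by rwa [Real.self_le_sinh_iff]) (sinh_le_cosh' u)

lemma cosh_ge_half_exp (u : ℝ) : Real.exp u / 2 ≤ Real.cosh u := by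
  rw [Real.cosh_eq]
  have := (Real.exp_pos (-u)).le
  linarith

lemma cosh_ge_one_add_sq {u : ℝ} (hu : 0 ≤ u) : 1 + u^2/2 ≤ Real.cosh u := by
  have h2 : Real.cosh (2 * (u/2)) = Real.cosh (u/2)^2 + Real.sinh (u/2)^2 :=
    Real.cosh_two_mul _
  have h3 : Real.cosh (u/2)^2 = Real.sinh (u/2)^2 + 1 := Real.cosh_sq _
  have h2' : Real.cosh u = 1 + 2 * Real.sinh (u/2)^2 := by
    have : 2 * (u/2) = u := by ring
    rw [this] at h2; rw [h2, h3]; ring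
  have h4 : u/2 ≤ Real.sinh (u/2) := Real.self_le_sinh_iff.2 (by linarith)
  have h5 : (u/2)^2 ≤ Real.sinh (u/2)^2 := by
    apply sq_le_sq' _ h4; nlinarith
  rw [h2']; nlinarith

lemma K0_integrand_integrable {t : ℝ} (ht : 0 < t) :
    IntegrableOn (fun u => Real.exp (-t * Real.cosh u)) (Ioi (0:ℝ)) := by
  apply Integrable.mono' ((exp_neg_integrableOn_Ioi 0 ht))
  · apply Continuous.aestronglyMeasurable; fun_prop
  · filter_upwards [ae_restrict_mem measurableSet_Ioi] with u hu
    rw [Real.norm_eq_abs, abs_of_pos (Real.exp_pos _), Real.exp_le_exp]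
    have := cosh_ge_self (le_of_lt hu)
    nlinarith

lemma K0_le_gauss {t : ℝ} (ht : 0 < t) :
    besselK0 t ≤ Real.exp (-t) * Real.sqrt (π / (2*t)) := by
  have hint : IntegrableOn (fun u => Real.exp (-t) * Real.exp (-(t/2) * u^2)) (Ioi (0:ℝ)) :=
    ((integrable_exp_neg_mul_sq (by linarith : 0 < t/2)).integrableOn).const_mul _
  have hmono : besselK0 t ≤ ∫ u in Ioi (0:ℝ), Real.exp (-t) * Real.exp (-(t/2) * u^2) := by
    apply setIntegral_mono_on (K0_integrand_integrable ht) hint measurableSet_Ioi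
    intro u hu
    rw [← Real.exp_add, Real.exp_le_exp]
    have := cosh_ge_one_add_sq (le_of_lt (mem_Ioi.1 hu))
    nlinarith
  refine hmono.trans ?_
  rw [integral_const_mul]
  have hg : ∫ u in Ioi (0:ℝ), Real.exp (-(t/2) * u^2) = Real.sqrt (π / (t/2)) / 2 := by
    have := integral_gaussian_Ioi (t/2)
    simpa using this
  rw [hg]
  have h28 : Real.sqrt (π / (t/2)) / 2 = Real.sqrt (π / (2*t)) := by
    rw [div_eq_iff (by norm_num : (2:ℝ) ≠ 0)]
    rw [eq_comm, ← Real.sqrt_mul_self (by norm_num : (0:ℝ) ≤ 2), ← Real.sqrt_mul (by positivity)]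
    congr 1; field_simp; ring
  rw [h28]

lemma rpow_eighth_le_exp {x : ℝ} (hx : 0 < x) : x ^ ((1:ℝ)/8) ≤ Real.exp x := by
  rcases le_or_gt x 1 with h | h
  · have h1 : x ^ ((1:ℝ)/8) ≤ 1 := Real.rpow_le_one hx.le h (by norm_num)
    have := Real.add_one_le_exp x
    linarith
  · have h1 : x ^ ((1:ℝ)/8) ≤ x ^ (1:ℝ) :=
      Real.rpow_le_rpow_of_exponent_le h.le (by norm_num)
    rw [Real.rpow_one] at h1
    have := Real.add_one_le_exp x
    linarith

lemma exp_neg_le_rpow {x : ℝ} (hx : 0 < x) : Real.exp (-x) ≤ x ^ (-((1:ℝ)/8)) := by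
  have h := rpow_eighth_le_exp hx
  rw [Real.exp_neg, Real.rpow_neg hx.le]
  exact inv_anti₀ (Real.rpow_pos_of_pos hx _) h

/-- abstract constant for the small-`t` bound on `K0` -/
noncomputable def CK : ℝ := 2 ^ ((1:ℝ)/8) * ∫ u in Ioi (0:ℝ), Real.exp (-(1/8) * u)

lemma CK_nonneg : 0 ≤ CK := by
  apply mul_nonneg (by positivity)
  apply integral_nonneg; intro u; positivity

lemma K0_le_rpow {t : ℝ} (ht : 0 < t) : besselK0 t ≤ CK * t ^ (-((1:ℝ)/8)) := by
  have hbint : IntegrableOn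
      (fun u => t ^ (-((1:ℝ)/8)) * 2 ^ ((1:ℝ)/8) * Real.exp (-(1/8) * u)) (Ioi (0:ℝ)) :=
    (exp_neg_integrableOn_Ioi 0 (by norm_num)).const_mul _
  have hmono : besselK0 t ≤
      ∫ u in Ioi (0:ℝ), t ^ (-((1:ℝ)/8)) * 2 ^ ((1:ℝ)/8) * Real.exp (-(1/8) * u) := by
    apply setIntegral_mono_on (K0_integrand_integrable ht) hbint measurableSet_Ioi
    intro u hu
    have hu0 : (0:ℝ) < u := mem_Ioi.1 hu
    have hcosh : Real.exp u / 2 ≤ Real.cosh u := cosh_ge_half_exp u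
    have hchpos : (0:ℝ) < Real.cosh u := Real.cosh_pos u
    have h1 : Real.exp (-(t * Real.cosh u)) ≤ (t * Real.cosh u) ^ (-((1:ℝ)/8)) :=
      exp_neg_le_rpow (mul_pos ht hchpos)
    rw [neg_mul]
    refine h1.trans ?_
    rw [Real.mul_rpow ht.le hchpos.le, mul_assoc]
    apply mul_le_mul_of_nonneg_left _ (Real.rpow_nonneg ht.le _)
    have h2 : Real.cosh u ^ (-((1:ℝ)/8)) ≤ (Real.exp u / 2) ^ (-((1:ℝ)/8)) :=
      Real.rpow_le_rpow_of_nonpos (by positivity) hcosh (by norm_num)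
    refine h2.trans ?_
    rw [div_eq_mul_inv, Real.mul_rpow (Real.exp_pos u).le (by norm_num),
      ← Real.exp_mul, Real.inv_rpow (by norm_num : (0:ℝ) ≤ 2),
      Real.rpow_neg (by norm_num : (0:ℝ) ≤ 2), inv_inv]
    rw [mul_comm (Real.exp _)]
    apply le_of_eq
    congr 1
    ring
  refine hmono.trans (le_of_eq ?_)
  rw [CK]
  rw [show (fun u => t ^ (-((1:ℝ)/8)) * 2 ^ ((1:ℝ)/8) * Real.exp (-(1/8) * u))
      = (fun u => (t ^ (-((1:ℝ)/8)) * 2 ^ ((1:ℝ)/8)) * Real.exp (-(1/8) * u)) from rfl]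
  rw [integral_const_mul]
  ring




lemma I0_continuous : Continuous besselI0 := by
  rw [continuous_iff_continuousAt]
  intro t₀
  apply ContinuousAt.mul continuousAt_const
  apply intervalIntegral.continuousAt_of_dominated_interval
    (bound := fun _ => Real.exp (|t₀| + 1))
  · filter_upwards with x
    apply Continuous.aestronglyMeasurable; fun_prop
  · filter_upwards [Metric.ball_mem_nhds t₀ one_pos] with x hx
    filter_upwards with θ _
    rw [Real.norm_eq_abs, abs_of_pos (Real.exp_pos _), Real.exp_le_exp]
    have hxb : |x| ≤ |t₀| + 1 := by
      have := abs_sub_abs_le_abs_sub x t₀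
      have h2 : |x - t₀| < 1 := by simpa [Real.dist_eq] using hx
      linarith
    calc x * Real.cos θ ≤ |x * Real.cos θ| := le_abs_self _
      _ = |x| * |Real.cos θ| := abs_mul _ _
      _ ≤ (|t₀| + 1) * 1 := by
          apply mul_le_mul hxb (abs_cos_le_one θ) (abs_nonneg _) (by positivity)
      _ = |t₀| + 1 := mul_one _
  · apply intervalIntegrable_const
  · filter_upwards with θ _
    fun_prop

lemma K0_continuousOn : ContinuousOn besselK0 (Ioi (0:ℝ)) := by
  intro t₀ ht₀
  apply ContinuousAt.continuousWithinAt
  have ht2 : (0:ℝ) < t₀/2 := by simpa using (half_pos (mem_Ioi.1 ht₀))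
  apply MeasureTheory.continuousAt_of_dominated
    (bound := fun u => Real.exp (-(t₀/2) * Real.cosh u))
  · filter_upwards with x
    apply Continuous.aestronglyMeasurable; fun_prop
  · filter_upwards [Metric.ball_mem_nhds t₀ ht2] with x hx
    filter_upwards with u
    rw [Real.norm_eq_abs, abs_of_pos (Real.exp_pos _), Real.exp_le_exp]
    have h2 : |x - t₀| < t₀/2 := by simpa [Real.dist_eq] using hx
    have hx2 : t₀/2 ≤ x := by
      have := abs_lt.1 h2; linarith [this.1]
    have := Real.cosh_pos u
    nlinarith
  · exact K0_integrand_integrable ht2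
  · filter_upwards with u
    fun_prop

lemma one_sub_cos {θ : ℝ} (h0 : 0 ≤ θ) (h1 : θ ≤ π/2) : θ^2/3 ≤ 1 - Real.cos θ := by
  rcases eq_or_lt_of_le h0 with rfl | h0'
  · simp
  have hcos : Real.cos θ = 1 - 2 * Real.sin (θ/2)^2 := by
    have h2 : Real.cos (2 * (θ/2)) = 2 * Real.cos (θ/2)^2 - 1 := Real.cos_two_mul _
    have h3 : Real.sin (θ/2)^2 + Real.cos (θ/2)^2 = 1 := Real.sin_sq_add_cos_sq _
    have h4 : 2 * (θ/2) = θ := by ring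
    rw [h4] at h2; linarith
  have hy0 : (0:ℝ) < θ/2 := by linarith
  have hy1 : θ/2 ≤ 1 := by
    have := Real.pi_le_four; linarith
  have hsin : θ/2 - (θ/2)^3/4 < Real.sin (θ/2) := by
    have := Real.sin_gt_sub_cube hy0; nlinarith [pow_pos hy0 3]
  have hcube : (θ/2)^3/4 ≤ (θ/2) * (1/6) := by
    have hb : θ/2 ≤ π/4 := by linarith
    have hpi : π ≤ 3.15 := by linarith [Real.pi_lt_d2]
    have hsq' : (θ/2)^2 ≤ (3.15/4)^2 := by nlinarith
    nlinarith
  have hsin2 : (5/6) * (θ/2) ≤ Real.sin (θ/2) := by nlinarith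
  have hs0 : 0 ≤ Real.sin (θ/2) := by nlinarith
  have : (5/6 * (θ/2))^2 ≤ Real.sin (θ/2)^2 := by nlinarith
  rw [hcos]; nlinarith

lemma I0_le_of_one_le {t : ℝ} (ht : 1 ≤ t) : besselI0 t ≤ 2 * Real.exp t / Real.sqrt t := by
  have ht0 : (0:ℝ) < t := by linarith
  have hsplit : ∫ θ in (0:ℝ)..π, Real.exp (t * Real.cos θ)
      = (∫ θ in (0:ℝ)..(π/2), Real.exp (t * Real.cos θ))
        + ∫ θ in (π/2)..π, Real.exp (t * Real.cos θ) := by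
    rw [intervalIntegral.integral_add_adjacent_intervals] <;>
      · apply Continuous.intervalIntegrable; fun_prop
  have h2 : ∫ θ in (π/2)..π, Real.exp (t * Real.cos θ) ≤ π/2 := by
    have : ∫ θ in (π/2)..π, Real.exp (t * Real.cos θ) ≤ ∫ θ in (π/2)..π, (1:ℝ) := by
      apply intervalIntegral.integral_mono_on (by linarith [Real.pi_pos])
      · apply Continuous.intervalIntegrable; fun_prop
      · apply intervalIntegrable_const
      · intro θ hθ
        rw [Real.exp_le_one_iff]
        have hc : Real.cos θ ≤ 0 :=
          Real.cos_nonpos_of_pi_div_two_le_of_le hθ.1 (by linarith [hθ.2, Real.pi_pos])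
        nlinarith
    rw [intervalIntegral.integral_const, smul_eq_mul, mul_one] at this
    linarith
  have h1 : ∫ θ in (0:ℝ)..(π/2), Real.exp (t * Real.cos θ)
      ≤ Real.exp t * (Real.sqrt (π/(t/3)) / 2) := by
    have hstep : ∫ θ in (0:ℝ)..(π/2), Real.exp (t * Real.cos θ)
        ≤ ∫ θ in (0:ℝ)..(π/2), Real.exp t * Real.exp (-(t/3) * θ^2) := by
      apply intervalIntegral.integral_mono_on (by linarith [Real.pi_pos])
      · apply Continuous.intervalIntegrable; fun_prop
      · apply Continuous.intervalIntegrable; fun_prop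
      · intro θ hθ
        rw [← Real.exp_add, Real.exp_le_exp]
        have := one_sub_cos hθ.1 hθ.2
        nlinarith
    refine hstep.trans ?_
    rw [intervalIntegral.integral_const_mul]
    apply mul_le_mul_of_nonneg_left _ (Real.exp_pos t).le
    have hIoc : ∫ θ in (0:ℝ)..(π/2), Real.exp (-(t/3) * θ^2)
        = ∫ θ in Ioc (0:ℝ) (π/2), Real.exp (-(t/3) * θ^2) := by
      rw [intervalIntegral.integral_of_le (by linarith [Real.pi_pos])]
    rw [hIoc, ← integral_gaussian_Ioi (t/3)]
    apply setIntegral_mono_set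
    · exact (integrable_exp_neg_mul_sq (by linarith : 0 < t/3)).integrableOn
    · filter_upwards with θ; positivity
    · filter_upwards with θ; exact fun hθ => hθ.1
  have hst : (0:ℝ) < Real.sqrt t := Real.sqrt_pos.2 ht0
  have hsq : Real.sqrt (π/(t/3)) / 2 ≤ π / Real.sqrt t := by
    have he : Real.sqrt (π/(t/3)) = Real.sqrt (3*π) / Real.sqrt t := by
      rw [show π/(t/3) = (3*π)/t by field_simp, Real.sqrt_div (by positivity) t]
    have h3pi : Real.sqrt (3*π) ≤ 2*π := by
      have h1 : (3:ℝ)*π ≤ (2*π)^2 := by nlinarith [Real.pi_gt_three]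
      calc Real.sqrt (3*π) ≤ Real.sqrt ((2*π)^2) := Real.sqrt_le_sqrt h1
        _ = 2*π := Real.sqrt_sq (by positivity)
    rw [he, div_div, div_le_div_iff₀ (by positivity) hst]
    calc Real.sqrt (3*π) * Real.sqrt t ≤ (2*π) * Real.sqrt t :=
          mul_le_mul_of_nonneg_right h3pi hst.le
      _ = π * (Real.sqrt t * 2) := by ring
  have hA : ∫ θ in (0:ℝ)..(π/2), Real.exp (t * Real.cos θ) ≤ Real.exp t * (π / Real.sqrt t) :=
    h1.trans (mul_le_mul_of_nonneg_left hsq (Real.exp_pos t).le)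
  have hhalf : (1:ℝ)/2 ≤ Real.exp t / Real.sqrt t := by
    rw [le_div_iff₀ hst]
    have h4 : Real.sqrt t ≤ t := by
      calc Real.sqrt t ≤ Real.sqrt (t^2) := Real.sqrt_le_sqrt (by nlinarith)
        _ = t := Real.sqrt_sq ht0.le
    have h5 := Real.add_one_le_exp t
    linarith
  have hfin : besselI0 t ≤ Real.exp t / Real.sqrt t + 1/2 := by
    rw [besselI0, hsplit]
    have hπ : (0:ℝ) < π := Real.pi_pos
    have : (1/π) * ((Real.exp t * (π / Real.sqrt t)) + π/2)
        = Real.exp t / Real.sqrt t + 1/2 := by field_simp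
    rw [← this]
    apply mul_le_mul_of_nonneg_left (by linarith) (by positivity)
  have h2e : 2 * Real.exp t / Real.sqrt t = 2 * (Real.exp t / Real.sqrt t) := by ring
  linarith



lemma integral_cos_pow_odd (k : ℕ) : ∫ θ in (0:ℝ)..π, Real.cos θ ^ (2*k+1) = 0 := by
  induction k with
  | zero => simp
  | succ n ih =>
    have h := integral_cos_pow (a := 0) (b := π) (n := 2*n+1)
    rw [show 2*(n+1)+1 = (2*n+1)+2 by ring, h, ih]
    simp

lemma integral_cos_pow_even (k : ℕ) :
    ∫ θ in (0:ℝ)..π, Real.cos θ ^ (2*k)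
      = π * ((2*k).factorial : ℝ) / (4^k * ((k.factorial : ℝ))^2) := by
  induction k with
  | zero => simp
  | succ n ih =>
    have h := integral_cos_pow (a := 0) (b := π) (n := 2*n)
    rw [show 2*(n+1) = (2*n)+2 by ring, h, ih]
    have e1 : ((2*n+2).factorial : ℝ)
        = (((2*n:ℕ):ℝ)+2)*(((2*n:ℕ):ℝ)+1)*((2*n).factorial : ℝ) := by
      rw [show 2*n+2 = (2*n+1)+1 by ring, Nat.factorial_succ, Nat.factorial_succ]
      push_cast; ring
    have e2 : (((n+1).factorial : ℝ)) = ((n:ℝ)+1) * (n.factorial : ℝ) := by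
      rw [Nat.factorial_succ]; push_cast; ring
    have hfac : ((2*n).factorial : ℝ) ≠ 0 := Nat.cast_ne_zero.2 (Nat.factorial_ne_zero _)
    have hfac2 : ((n).factorial : ℝ) ≠ 0 := Nat.cast_ne_zero.2 (Nat.factorial_ne_zero _)
    rw [e1, e2]
    simp only [Real.sin_pi, Real.sin_zero]
    push_cast
    field_simp
    ring

lemma I0_hasSum (y : ℝ) :
    HasSum (fun k : ℕ => y^(2*k) / (4^k * ((k.factorial : ℝ))^2)) (besselI0 y) := by
  have h0 : besselI0 y = (1/π) * ∫ θ in Ioc (0:ℝ) π, Real.exp (y * Real.cos θ) := by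
    rw [besselI0, intervalIntegral.integral_of_le Real.pi_pos.le]
  have hs : HasSum (fun n : ℕ => ∫ θ in Ioc (0:ℝ) π, (y * Real.cos θ)^n / (n.factorial : ℝ))
      (∫ θ in Ioc (0:ℝ) π, Real.exp (y * Real.cos θ)) := by
    apply MeasureTheory.hasSum_integral_of_dominated_convergence
      (bound := fun n _ => |y|^n / (n.factorial : ℝ))
    · intro n; apply Continuous.aestronglyMeasurable; fun_prop
    · intro n; filter_upwards with θ
      rw [Real.norm_eq_abs, abs_div, abs_pow, Nat.abs_cast]
      have hb : |y * Real.cos θ| ≤ |y| := by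
        rw [abs_mul]; exact mul_le_of_le_one_right (abs_nonneg y) (Real.abs_cos_le_one θ)
      gcongr
    · filter_upwards with θ
      exact Real.summable_pow_div_factorial |y|
    · exact integrableOn_const measure_Ioc_lt_top.ne
    · filter_upwards with θ
      have := NormedSpace.expSeries_div_hasSum_exp (y * Real.cos θ)
      rwa [← Real.exp_eq_exp_ℝ] at this
  have hval : ∀ n : ℕ, ∫ θ in Ioc (0:ℝ) π, (y * Real.cos θ)^n / (n.factorial : ℝ)
      = y^n / (n.factorial : ℝ) * ∫ θ in (0:ℝ)..π, Real.cos θ^n := by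
    intro n
    rw [intervalIntegral.integral_of_le Real.pi_pos.le, ← integral_const_mul]
    congr 1; ext θ; rw [mul_pow]; ring
  have hs2 : HasSum (fun n : ℕ => (1/π) * (y^n / (n.factorial : ℝ) * ∫ θ in (0:ℝ)..π, Real.cos θ^n))
      (besselI0 y) := by
    rw [h0]
    exact (hs.mul_left (1/π)).congr_fun (fun n => by rw [hval n])
  set g : ℕ → ℝ := fun n => (1/π) * (y^n / (n.factorial : ℝ) * ∫ θ in (0:ℝ)..π, Real.cos θ^n)
    with hg
  have hinj : Function.Injective (fun k : ℕ => 2*k) := fun a b h =>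
    Nat.eq_of_mul_eq_mul_left two_pos h
  have hzero : ∀ x ∉ Set.range (fun k : ℕ => 2*k), g x = 0 := by
    intro x hx
    have ho : Odd x := by simpa using hx
    obtain ⟨m, rfl⟩ := ho
    rw [hg]; simp only []
    rw [integral_cos_pow_odd m]; ring
  have := (Function.Injective.hasSum_iff hinj hzero).2 hs2
  apply this.congr_fun
  intro k
  show y^(2*k) / (4^k * ((k.factorial : ℝ))^2) = g (2*k)
  rw [hg]; simp only []
  rw [integral_cos_pow_even k]
  have hπ : (π:ℝ) ≠ 0 := Real.pi_ne_zero
  have hfac : ((2*k).factorial : ℝ) ≠ 0 := Nat.cast_ne_zero.2 (Nat.factorial_ne_zero _)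
  field_simp


/-! ### Part D : main assembly -/

noncomputable def Ff (t : ℝ) : ℝ := besselI0 t * besselK0 t ^ 4

noncomputable def Gg (t : ℝ) : ℝ := Ff t * (3 * t * besselI0 (3 * t))

lemma Ff_nonneg (t : ℝ) : 0 ≤ Ff t :=
  mul_nonneg (I0_nonneg t) (pow_nonneg (K0_nonneg t) 4)

lemma Ff_contOn : ContinuousOn Ff (Ioi (0:ℝ)) :=
  (I0_continuous.continuousOn).mul (K0_continuousOn.pow 4)

/-- power series for `y ↦ y * I0 y` -/
lemma yI0_hasSum (y : ℝ) :
    HasSum (fun k : ℕ => y^(2*k+1) / (4^k * ((k.factorial : ℝ))^2)) (y * besselI0 y) :=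
  ((I0_hasSum y).mul_left y).congr_fun (fun k => by rw [pow_succ']; ring)

lemma I0_even (y : ℝ) : besselI0 (-y) = besselI0 y :=
  HasSum.unique (I0_hasSum (-y))
    ((I0_hasSum y).congr_fun (fun k => by rw [show (-y)^(2*k) = y^(2*k) by rw [neg_pow]; simp [pow_mul]]))

lemma yI0_mono {y₁ y₂ : ℝ} (h0 : 0 ≤ y₁) (h12 : y₁ ≤ y₂) :
    y₁ * besselI0 y₁ ≤ y₂ * besselI0 y₂ := by
  apply hasSum_le _ (yI0_hasSum y₁) (yI0_hasSum y₂)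
  intro k
  have hp : y₁^(2*k+1) ≤ y₂^(2*k+1) := pow_le_pow_left₀ h0 h12 _
  have hc : (0:ℝ) < 4^k * ((k.factorial : ℝ))^2 := by positivity
  gcongr

lemma abs_yI0_le {x t : ℝ} (hx : |x| ≤ 3) (ht : 0 ≤ t) :
    |x * t * besselI0 (x * t)| ≤ 3 * t * besselI0 (3 * t) := by
  have heven : besselI0 (x*t) = besselI0 |x*t| := by
    rcases abs_choice (x*t) with h | h
    · rw [h]
    · rw [h, I0_even]
  rw [abs_mul, abs_of_nonneg (I0_nonneg _), heven]
  apply yI0_mono (abs_nonneg _)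
  calc |x*t| = |x| * t := by rw [abs_mul, abs_of_nonneg ht]
    _ ≤ 3 * t := mul_le_mul_of_nonneg_right hx ht

lemma pow_le_factorial_mul_exp {t : ℝ} (ht : 0 ≤ t) (m : ℕ) :
    t^m ≤ (m.factorial : ℝ) * Real.exp t := by
  have h1 : t^m / (m.factorial : ℝ) ≤ Real.exp t := by
    have h2 : ∑ i ∈ Finset.range (m+1), t^i / (i.factorial : ℝ) ≤ Real.exp t :=
      Real.sum_le_exp_of_nonneg ht (m+1)
    refine le_trans ?_ h2
    apply Finset.single_le_sum (f := fun i => t^i / (i.factorial : ℝ))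
      (fun i _ => by positivity) (Finset.self_mem_range_succ m)
  have hm : (0:ℝ) < (m.factorial : ℝ) := by positivity
  rw [div_le_iff₀ hm] at h1
  linarith [h1]

/-- `K0 t ^ 4 ≤ CK^4 * t^(-1/2)` for `0 < t`. -/
lemma K0_pow4_le_small {t : ℝ} (ht : 0 < t) :
    besselK0 t ^ 4 ≤ CK^4 * t ^ (-(1:ℝ)/2) := by
  have h := K0_le_rpow ht
  have h4 : besselK0 t ^ 4 ≤ (CK * t ^ (-((1:ℝ)/8)))^4 :=
    pow_le_pow_left₀ (K0_nonneg t) h 4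
  refine h4.trans (le_of_eq ?_)
  rw [mul_pow, ← Real.rpow_natCast (t ^ (-((1:ℝ)/8))) 4, ← Real.rpow_mul ht.le]
  norm_num


/-- `K0 t ^ 4 ≤ (π^2/4) * exp (-4t) * t^(-2)` for `0 < t` (as powers). -/
lemma K0_pow4_le_large {t : ℝ} (ht : 0 < t) :
    besselK0 t ^ 4 ≤ π^2 / 4 * Real.exp (-(4*t)) / t^2 := by
  have h := K0_le_gauss ht
  have h4 : besselK0 t ^ 4 ≤ (Real.exp (-t) * Real.sqrt (π/(2*t)))^4 :=
    pow_le_pow_left₀ (K0_nonneg t) h 4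
  refine h4.trans (le_of_eq ?_)
  have hsq : Real.sqrt (π/(2*t)) ^ 4 = (π/(2*t))^2 := by
    rw [show (4:ℕ) = 2*2 by rfl, pow_mul, Real.sq_sqrt (by positivity)]
  rw [mul_pow, hsq, ← Real.exp_nat_mul]
  rw [show ((4:ℕ):ℝ) * (-t) = -(4*t) by push_cast; ring]
  field_simp
  ring

lemma Fk_integrable (k : ℕ) :
    IntegrableOn (fun t => Ff t * t^(2*k+1)) (Ioi (0:ℝ)) := by
  have hmeas : ContinuousOn (fun t => Ff t * t^(2*k+1)) (Ioi (0:ℝ)) :=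
    Ff_contOn.mul (continuous_pow _).continuousOn
  rw [← Ioc_union_Ioi_eq_Ioi (le_of_lt one_pos)]
  apply IntegrableOn.union
  · -- on Ioc 0 1 : bounded by e * CK^4
    apply Integrable.mono' (g := fun _ => Real.exp 1 * CK^4)
      (integrableOn_const measure_Ioc_lt_top.ne)
    · exact (hmeas.mono Ioc_subset_Ioi_self).aestronglyMeasurable measurableSet_Ioc
    · filter_upwards [ae_restrict_mem measurableSet_Ioc] with t htm
      obtain ⟨ht0, ht1⟩ := htm
      have hF : 0 ≤ Ff t * t^(2*k+1) :=
        mul_nonneg (Ff_nonneg t) (pow_nonneg ht0.le _)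
      rw [Real.norm_eq_abs, abs_of_nonneg hF]
      have hI : besselI0 t ≤ Real.exp 1 := by
        have := I0_le_exp_abs t
        have : besselI0 t ≤ Real.exp |t| := this
        refine this.trans (Real.exp_le_exp.2 ?_)
        rw [abs_of_pos ht0]; exact ht1
      have hK : besselK0 t ^ 4 ≤ CK^4 * t ^ (-(1:ℝ)/2) := K0_pow4_le_small ht0
      have hpow : t^(2*k+1) ≤ t := by
        calc t^(2*k+1) ≤ t^1 := pow_le_pow_of_le_one ht0.le ht1 (by omega)
          _ = t := pow_one t
      have hrt : t ^ (-(1:ℝ)/2) * t ≤ 1 := by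
        have h1 : t ^ (-(1:ℝ)/2) * t = t ^ ((1:ℝ)/2) := by
          nth_rewrite 2 [show t = t ^ (1:ℝ) from (Real.rpow_one t).symm]
          rw [← Real.rpow_add ht0]
          norm_num
        rw [h1]
        exact Real.rpow_le_one ht0.le ht1 (by norm_num)
      calc Ff t * t^(2*k+1) ≤ (Real.exp 1 * (CK^4 * t ^ (-(1:ℝ)/2))) * t := by
            apply mul_le_mul _ hpow (pow_nonneg ht0.le _) (by positivity)
            exact mul_le_mul hI hK (pow_nonneg (K0_nonneg t) 4) (Real.exp_pos 1).le
        _ = Real.exp 1 * CK^4 * (t ^ (-(1:ℝ)/2) * t) := by ring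
        _ ≤ Real.exp 1 * CK^4 * 1 := by
            apply mul_le_mul_of_nonneg_left hrt (by positivity)
        _ = Real.exp 1 * CK^4 := mul_one _
  · -- on Ioi 1 : bounded by (π^2/4 * (2k+1)!) * exp (-2t)
    apply Integrable.mono'
      (g := fun t => (π^2/4 * (((2*k+1).factorial : ℝ))) * Real.exp (-(2:ℝ)*t))
      ((exp_neg_integrableOn_Ioi 1 (by norm_num)).const_mul _)
    · exact (hmeas.mono (Ioi_subset_Ioi one_pos.le)).aestronglyMeasurable measurableSet_Ioi
    · filter_upwards [ae_restrict_mem measurableSet_Ioi] with t htm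
      have ht1 : (1:ℝ) < t := htm
      have ht0 : (0:ℝ) < t := by linarith
      have hF : 0 ≤ Ff t * t^(2*k+1) :=
        mul_nonneg (Ff_nonneg t) (pow_nonneg ht0.le _)
      rw [Real.norm_eq_abs, abs_of_nonneg hF]
      have hI : besselI0 t ≤ Real.exp t := by
        have := I0_le_exp_abs t
        rwa [abs_of_pos ht0] at this
      have hK := K0_pow4_le_large ht0
      have hpow : t^(2*k+1) ≤ (((2*k+1).factorial : ℝ)) * Real.exp t :=
        pow_le_factorial_mul_exp ht0.le _
      have ht2 : (1:ℝ) ≤ t^2 := by nlinarith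
      calc Ff t * t^(2*k+1)
          ≤ (Real.exp t * (π^2/4 * Real.exp (-(4*t)) / t^2)) * ((((2*k+1).factorial : ℝ)) * Real.exp t) := by
            apply mul_le_mul _ hpow (pow_nonneg ht0.le _) _
            · exact mul_le_mul hI hK (pow_nonneg (K0_nonneg t) 4) (Real.exp_pos t).le
            · positivity
        _ = (π^2/4 * (((2*k+1).factorial : ℝ))) * (Real.exp t * Real.exp (-(4*t)) * Real.exp t) / t^2 := by
            ring
        _ ≤ (π^2/4 * (((2*k+1).factorial : ℝ))) * (Real.exp t * Real.exp (-(4*t)) * Real.exp t) / 1 := by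
            apply div_le_div_of_nonneg_left (by positivity) one_pos ht2
        _ = (π^2/4 * (((2*k+1).factorial : ℝ))) * Real.exp (-(2:ℝ)*t) := by
            rw [← Real.exp_add, ← Real.exp_add]; ring_nf

lemma Gg_integrable : IntegrableOn Gg (Ioi (0:ℝ)) := by
  have hmeas : ContinuousOn Gg (Ioi (0:ℝ)) := by
    apply Ff_contOn.mul
    apply ContinuousOn.mul (by fun_prop)
    exact (I0_continuous.comp (continuous_const.mul continuous_id)).continuousOn
  rw [← Ioc_union_Ioi_eq_Ioi (le_of_lt one_pos)]
  apply IntegrableOn.union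
  · apply Integrable.mono' (g := fun _ => Real.exp 1 * CK^4 * (3 * Real.exp 3))
      (integrableOn_const measure_Ioc_lt_top.ne)
    · exact (hmeas.mono Ioc_subset_Ioi_self).aestronglyMeasurable measurableSet_Ioc
    · filter_upwards [ae_restrict_mem measurableSet_Ioc] with t htm
      obtain ⟨ht0, ht1⟩ := htm
      have hGn : 0 ≤ Gg t := by
        apply mul_nonneg (Ff_nonneg t)
        apply mul_nonneg (by linarith) (I0_nonneg _)
      rw [Real.norm_eq_abs, abs_of_nonneg hGn]
      have hI : besselI0 t ≤ Real.exp 1 := by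
        have h := I0_le_exp_abs t
        refine h.trans (Real.exp_le_exp.2 ?_)
        rw [abs_of_pos ht0]; exact ht1
      have hK : besselK0 t ^ 4 ≤ CK^4 * t ^ (-(1:ℝ)/2) := K0_pow4_le_small ht0
      have hI3 : besselI0 (3*t) ≤ Real.exp 3 := by
        have h := I0_le_exp_abs (3*t)
        refine h.trans (Real.exp_le_exp.2 ?_)
        rw [abs_of_pos (by linarith)]; linarith
      have hrt : t ^ (-(1:ℝ)/2) * t ≤ 1 := by
        have h1 : t ^ (-(1:ℝ)/2) * t = t ^ ((1:ℝ)/2) := by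
          nth_rewrite 2 [show t = t ^ (1:ℝ) from (Real.rpow_one t).symm]
          rw [← Real.rpow_add ht0]
          norm_num
        rw [h1]
        exact Real.rpow_le_one ht0.le ht1 (by norm_num)
      calc Gg t ≤ (Real.exp 1 * (CK^4 * t ^ (-(1:ℝ)/2))) * (3 * t * Real.exp 3) := by
            apply mul_le_mul
            · exact mul_le_mul hI hK (pow_nonneg (K0_nonneg t) 4) (Real.exp_pos 1).le
            · apply mul_le_mul_of_nonneg_left hI3 (by linarith)
            · apply mul_nonneg (by linarith) (I0_nonneg _)
            · positivity
        _ = (Real.exp 1 * CK^4 * (3 * Real.exp 3)) * (t ^ (-(1:ℝ)/2) * t) := by ring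
        _ ≤ (Real.exp 1 * CK^4 * (3 * Real.exp 3)) * 1 :=
            mul_le_mul_of_nonneg_left hrt (by positivity)
        _ = Real.exp 1 * CK^4 * (3 * Real.exp 3) := mul_one _
  · apply Integrable.mono' (g := fun t => 3 * π^2 * t ^ (-(2:ℝ)))
      ((integrableOn_Ioi_rpow_of_lt (by norm_num) one_pos).const_mul _)
    · exact (hmeas.mono (Ioi_subset_Ioi one_pos.le)).aestronglyMeasurable measurableSet_Ioi
    · filter_upwards [ae_restrict_mem measurableSet_Ioi] with t htm
      have ht1 : (1:ℝ) < t := htm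
      have ht0 : (0:ℝ) < t := by linarith
      have h3t : (1:ℝ) ≤ 3*t := by linarith
      have hGn : 0 ≤ Gg t := by
        apply mul_nonneg (Ff_nonneg t)
        apply mul_nonneg (by linarith) (I0_nonneg _)
      rw [Real.norm_eq_abs, abs_of_nonneg hGn]
      have hI : besselI0 t ≤ 2 * Real.exp t / Real.sqrt t := I0_le_of_one_le ht1.le
      have hI3 : besselI0 (3*t) ≤ 2 * Real.exp (3*t) / Real.sqrt t := by
        refine (I0_le_of_one_le h3t).trans ?_
        apply div_le_div_of_nonneg_left (by positivity) (Real.sqrt_pos.2 ht0)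
        exact Real.sqrt_le_sqrt (by linarith)
      have hK := K0_pow4_le_large ht0
      have hst : (0:ℝ) < Real.sqrt t := Real.sqrt_pos.2 ht0
      have hsq : Real.sqrt t * Real.sqrt t = t := Real.mul_self_sqrt ht0.le
      have key : Gg t ≤ 3 * π^2 * t ^ (-(2:ℝ)) := by
        have hexp : Real.exp t * Real.exp (-(4*t)) * Real.exp (3*t) = 1 := by
          rw [← Real.exp_add, ← Real.exp_add, ← Real.exp_zero]
          congr 1; ring
        have e2 : t ^ (-(2:ℝ)) = 1 / t^2 := by
          rw [Real.rpow_neg ht0.le, Real.rpow_two]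
          simp
        calc Gg t ≤ ((2 * Real.exp t / Real.sqrt t) * (π^2/4 * Real.exp (-(4*t)) / t^2))
              * (3 * t * (2 * Real.exp (3*t) / Real.sqrt t)) := by
              apply mul_le_mul
              · exact mul_le_mul hI hK (pow_nonneg (K0_nonneg t) 4) (by positivity)
              · exact mul_le_mul_of_nonneg_left hI3 (by linarith)
              · apply mul_nonneg (by linarith) (I0_nonneg _)
              · positivity
          _ = 3 * π^2 * (Real.exp t * Real.exp (-(4*t)) * Real.exp (3*t))
                * (t / (Real.sqrt t * Real.sqrt t)) / t^2 := by
              field_simp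
              ring
          _ = 3 * π^2 * t ^ (-(2:ℝ)) := by
              rw [hexp, hsq, div_self ht0.ne', e2]; ring
      exact key

lemma FxI_integrable {x : ℝ} (hx : |x| ≤ 3) :
    IntegrableOn (fun t => Ff t * (x * t * besselI0 (x * t))) (Ioi (0:ℝ)) := by
  apply Integrable.mono' Gg_integrable
  · apply ContinuousOn.aestronglyMeasurable _ measurableSet_Ioi
    apply Ff_contOn.mul
    apply ContinuousOn.mul (by fun_prop)
    exact (I0_continuous.comp (continuous_const.mul continuous_id)).continuousOn
  · filter_upwards [ae_restrict_mem measurableSet_Ioi] with t htm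
    have ht0 : (0:ℝ) < t := htm
    rw [Real.norm_eq_abs, abs_mul, abs_of_nonneg (Ff_nonneg t)]
    exact mul_le_mul_of_nonneg_left (abs_yI0_le hx ht0.le) (Ff_nonneg t)

/-- partial sums of the series for `y * I0 y` -/
noncomputable def Q (n : ℕ) (y : ℝ) : ℝ :=
  ∑ k ∈ Finset.range n, y^(2*k+1) / (4^k * ((k.factorial : ℝ))^2)

lemma FQ_integrable (n : ℕ) (x : ℝ) :
    IntegrableOn (fun t => Ff t * Q n (x * t)) (Ioi (0:ℝ)) := by
  have : (fun t => Ff t * Q n (x * t))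
      = fun t => ∑ k ∈ Finset.range n,
          (x^(2*k+1) / (4^k * ((k.factorial : ℝ))^2)) * (Ff t * t^(2*k+1)) := by
    funext t
    rw [Q, Finset.mul_sum]
    apply Finset.sum_congr rfl
    intro k _
    rw [mul_pow]
    ring
  rw [this]
  apply integrable_finset_sum
  intro k _
  exact (Fk_integrable k).const_mul _

lemma r5_eq (k : ℕ) : r5 k = (30/π^4) * ((4^k * ((k.factorial:ℝ))^2)⁻¹
    * ∫ t in Ioi (0:ℝ), Ff t * t^(2*k+1)) := by
  rw [r5]
  have : (fun t => besselI0 t * besselK0 t^4 * t^(2*k+1)) = fun t => Ff t * t^(2*k+1) := rfl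
  rw [this, ← mul_assoc]
  congr 1
  have hπ : π ≠ 0 := Real.pi_ne_zero
  have h4 : ((4:ℝ))^k ≠ 0 := by positivity
  have hf : ((k.factorial:ℝ)) ≠ 0 := Nat.cast_ne_zero.2 (Nat.factorial_ne_zero _)
  field_simp

lemma partial_eq (x : ℝ) (n : ℕ) :
    ∑ k ∈ Finset.range n, r5 k * x^(2*k+1)
      = (30/π^4) * ∫ t in Ioi (0:ℝ), Ff t * Q n (x*t) := by
  have hfun : (fun t => Ff t * Q n (x*t)) = fun t => ∑ k ∈ Finset.range n,
      (x^(2*k+1) / (4^k*((k.factorial:ℝ))^2)) * (Ff t * t^(2*k+1)) := by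
    funext t
    rw [Q, Finset.mul_sum]
    apply Finset.sum_congr rfl
    intro k _
    rw [mul_pow]
    ring
  rw [hfun, integral_finset_sum _ (fun k _ => (Fk_integrable k).const_mul _), Finset.mul_sum]
  apply Finset.sum_congr rfl
  intro k _
  rw [integral_const_mul, r5_eq k]
  ring

lemma tendsto_intQ3 :
    Tendsto (fun n => ∫ t in Ioi (0:ℝ), Ff t * Q n (3*t)) atTop
      (𝓝 (∫ t in Ioi (0:ℝ), Gg t)) := by
  apply MeasureTheory.integral_tendsto_of_tendsto_of_monotone
  · intro n; exact FQ_integrable n 3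
  · exact Gg_integrable
  · filter_upwards [ae_restrict_mem measurableSet_Ioi] with t htm
    intro m n hmn
    have ht0 : (0:ℝ) < t := htm
    apply mul_le_mul_of_nonneg_left _ (Ff_nonneg t)
    apply Finset.sum_le_sum_of_subset_of_nonneg (Finset.range_subset_range.2 hmn)
    intro k _ _
    positivity
  · filter_upwards [ae_restrict_mem measurableSet_Ioi] with t htm
    have h := (yI0_hasSum (3*t)).tendsto_sum_nat
    exact h.const_mul (Ff t)

lemma tail_ptwise {x t : ℝ} (hx : |x| ≤ 3) (ht : 0 < t) (n : ℕ) :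
    |x*t*besselI0 (x*t) - Q n (x*t)| ≤ 3*t*besselI0 (3*t) - Q n (3*t) := by
  have hxt : |x*t| ≤ 3*t := by
    rw [abs_mul, abs_of_pos ht]
    exact mul_le_mul_of_nonneg_right hx ht.le
  have key : ∀ y : ℝ, HasSum (fun k => y^(2*(k+n)+1) / (4^(k+n) * (((k+n).factorial:ℝ))^2))
      (y*besselI0 y - Q n y) := by
    intro y
    apply (hasSum_nat_add_iff
      (f := fun k => y^(2*k+1) / (4^k * ((k.factorial:ℝ))^2)) n).mpr
    have hq : y * besselI0 y = (y*besselI0 y - Q n y)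
        + ∑ i ∈ Finset.range n, y^(2*i+1) / (4^i * ((i.factorial:ℝ))^2) := by
      rw [Q]; ring
    exact hq ▸ yI0_hasSum y
  have h1 := key (x*t)
  have h2 := key (3*t)
  have hterm : ∀ k : ℕ, |(x*t)^(2*(k+n)+1) / (4^(k+n) * (((k+n).factorial:ℝ))^2)|
      ≤ (3*t)^(2*(k+n)+1) / (4^(k+n) * (((k+n).factorial:ℝ))^2) := by
    intro k
    rw [abs_div, abs_pow, abs_of_pos (show (0:ℝ) < 4^(k+n) * (((k+n).factorial:ℝ))^2 by positivity)]
    gcongr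
  rw [abs_le]
  constructor
  · have hlow := hasSum_le (fun k => (abs_le.1 (hterm k)).1) h2.neg h1
    linarith
  · exact hasSum_le (fun k => (le_abs_self _).trans (hterm k)) h1 h2

lemma S_sub_partial_le {x : ℝ} (hx : x ∈ Icc (-3:ℝ) 3) (n : ℕ) :
    |S x - ∑ k ∈ Finset.range n, r5 k * x^(2*k+1)|
      ≤ (30/π^4) * ((∫ t in Ioi (0:ℝ), Gg t) - ∫ t in Ioi (0:ℝ), Ff t * Q n (3*t)) := by
  have hx3 : |x| ≤ 3 := abs_le.2 ⟨hx.1, hx.2⟩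
  have hSx : S x = (30/π^4) * ∫ t in Ioi (0:ℝ), Ff t * (x*t*besselI0 (x*t)) := by
    rw [S]
    congr 1
    apply setIntegral_congr_fun measurableSet_Ioi
    intro t _
    simp only [Ff]
    ring
  rw [hSx, partial_eq, ← mul_sub, abs_mul,
    abs_of_nonneg (show (0:ℝ) ≤ 30/π^4 by positivity)]
  apply mul_le_mul_of_nonneg_left _ (show (0:ℝ) ≤ 30/π^4 by positivity)
  rw [← integral_sub (FxI_integrable hx3) (FQ_integrable n x),
      ← integral_sub Gg_integrable (FQ_integrable n 3)]
  refine le_trans (by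
    simpa [Real.norm_eq_abs] using norm_integral_le_integral_norm
      (μ := volume.restrict (Ioi (0:ℝ)))
      (fun t => Ff t * (x*t*besselI0 (x*t)) - Ff t * Q n (x*t))) ?_
  apply integral_mono_ae
  · exact ((FxI_integrable hx3).sub (FQ_integrable n x)).abs
  · exact Gg_integrable.sub (FQ_integrable n 3)
  · filter_upwards [ae_restrict_mem measurableSet_Ioi] with t htm
    have ht0 : (0:ℝ) < t := htm
    have h := tail_ptwise hx3 ht0 n
    have hGg : Gg t - Ff t * Q n (3*t) = Ff t * (3*t*besselI0 (3*t) - Q n (3*t)) := by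
      rw [Gg]; ring
    rw [← mul_sub, abs_mul, abs_of_nonneg (Ff_nonneg t), hGg]
    exact mul_le_mul_of_nonneg_left h (Ff_nonneg t)

end BesselAux
open BesselAux in
theorem stmt_10 :
    ContinuousOn S (Set.Icc (-3 : ℝ) 3) ∧
    TendstoUniformlyOn
      (fun n : ℕ => fun x : ℝ => ∑ k ∈ Finset.range n, r5 k * x^(2*k+1))
      S Filter.atTop (Set.Icc (-3 : ℝ) 3) := by
  have hcontn : ∀ n : ℕ, Continuous (fun x : ℝ => ∑ k ∈ Finset.range n, r5 k * x^(2*k+1)) :=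
    fun n => continuous_finset_sum _ (fun k _ => continuous_const.mul (continuous_pow _))
  have hT : Tendsto (fun n => (30/π^4) *
      ((∫ t in Ioi (0:ℝ), Gg t) - ∫ t in Ioi (0:ℝ), Ff t * Q n (3*t))) atTop (𝓝 0) := by
    have h0 : Tendsto (fun n : ℕ => (∫ t in Ioi (0:ℝ), Gg t)
        - ∫ t in Ioi (0:ℝ), Ff t * Q n (3*t)) atTop
        (𝓝 ((∫ t in Ioi (0:ℝ), Gg t) - ∫ t in Ioi (0:ℝ), Gg t)) :=
      tendsto_const_nhds.sub tendsto_intQ3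
    have h2 := h0.const_mul (30/π^4)
    simpa using h2
  have huni : TendstoUniformlyOn
      (fun n : ℕ => fun x : ℝ => ∑ k ∈ Finset.range n, r5 k * x^(2*k+1))
      S Filter.atTop (Set.Icc (-3 : ℝ) 3) := by
    rw [Metric.tendstoUniformlyOn_iff]
    intro ε hε
    filter_upwards [hT.eventually (gt_mem_nhds hε)] with n hn x hxm
    rw [Real.dist_eq]
    exact lt_of_le_of_lt (S_sub_partial_le hxm n) hn
  exact ⟨huni.continuousOn (Filter.Eventually.of_forall fun n => (hcontn n).continuousOn).frequently, huni⟩
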